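/- The characteristic polynomial of the 3×3 integer matrix with rows (1,1,1), (1,−1,0), (1,0,0) equals X³ − 3X − 1; it is irreducible over ℚ and has three distinct real roots. -/

import Mathlib

open Matrix Polynomial

/-- An integer polynomial has three distinct real roots. -/
def hasThreeDistinctRealRoots (p : Polynomial ℤ) : Prop :=
  ∃ x y z : ℝ, x ≠ y ∧ x ≠ z ∧ y ≠ z ∧
    (p.map (Int.castRingHom ℝ)).IsRoot x ∧
    (p.map (Int.castRingHom ℝ)).IsRoot y ∧
    (p.map (Int.castRingHom ℝ)).IsRoot z

lemma charpoly_eq :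
    (!![1, 1, 1; 1, -1, 0; 1, 0, 0] : Matrix (Fin 3) (Fin 3) ℤ).charpoly
      = X ^ 3 - 3 * X - 1 := by
  rw [Matrix.charpoly, Matrix.det_fin_three]
  simp [charmatrix_apply, Matrix.one_apply, Matrix.vecHead, Matrix.vecTail]
  ring

lemma irred_q : Irreducible ((X ^ 3 - 3 * X - 1 : ℤ[X]).map (Int.castRingHom ℚ)) := by
  have hmap : (X ^ 3 - 3 * X - 1 : ℤ[X]).map (Int.castRingHom ℚ)
      = (X ^ 3 - 3 * X - 1 : ℚ[X]) := by
    simp [Polynomial.map_sub, Polynomial.map_mul, Polynomial.map_pow]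
  rw [hmap]
  have hmon : (X ^ 3 - 3 * X - 1 : ℚ[X]).Monic := by monicity!
  have hdeg : (X ^ 3 - 3 * X - 1 : ℚ[X]).natDegree = 3 := by compute_degree!
  rw [Polynomial.irreducible_iff_roots_eq_zero_of_degree_le_three (by omega) (by omega)]
  rw [Multiset.eq_zero_iff_forall_notMem]
  intro r hr
  rw [Polynomial.mem_roots hmon.ne_zero, Polynomial.IsRoot] at hr
  have hrr : r ^ 3 - 3 * r - 1 = 0 := by
    simpa using hr
  have haeval : Polynomial.aeval r (X ^ 3 - 3 * X - 1 : ℤ[X]) = 0 := by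
    simp only [_root_.map_sub, _root_.map_mul, map_pow, Polynomial.aeval_X,
      _root_.map_one, map_ofNat]
    simpa using hrr
  have hmonZ : (X ^ 3 - 3 * X - 1 : ℤ[X]).Monic := by monicity!
  obtain ⟨n, hn⟩ := isInteger_of_is_root_of_monic hmonZ haeval
  have hn0 : (n : ℚ) = r := hn
  have hnz : n ^ 3 - 3 * n - 1 = 0 := by
    rw [← hn0] at hrr
    exact_mod_cast hrr
  have hu : n * (n ^ 2 - 3) = 1 := by ring_nf; linarith [hnz]
  have hun : IsUnit n := IsUnit.of_mul_eq_one _ hu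
  rcases Int.isUnit_iff.mp hun with rfl | rfl <;> norm_num at hnz

lemma three_roots : hasThreeDistinctRealRoots (X ^ 3 - 3 * X - 1 : ℤ[X]) := by
  have hmap : (X ^ 3 - 3 * X - 1 : ℤ[X]).map (Int.castRingHom ℝ)
      = (X ^ 3 - 3 * X - 1 : ℝ[X]) := by
    simp [Polynomial.map_sub, Polynomial.map_mul, Polynomial.map_pow]
  have hcont : Continuous fun x : ℝ => x ^ 3 - 3 * x - 1 := by continuity
  have ivt : ∀ a b : ℝ, a ≤ b → a ^ 3 - 3 * a - 1 ≤ 0 → 0 ≤ b ^ 3 - 3 * b - 1 →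
      ∃ c ∈ Set.Icc a b, c ^ 3 - 3 * c - 1 = 0 := by
    intro a b hab ha hb
    obtain ⟨c, hc, hc0⟩ := intermediate_value_Icc hab hcont.continuousOn ⟨ha, hb⟩
    exact ⟨c, hc, hc0⟩
  have ivt' : ∀ a b : ℝ, a ≤ b → 0 ≤ a ^ 3 - 3 * a - 1 → b ^ 3 - 3 * b - 1 ≤ 0 →
      ∃ c ∈ Set.Icc a b, c ^ 3 - 3 * c - 1 = 0 := by
    intro a b hab ha hb
    obtain ⟨c, hc, hc0⟩ := intermediate_value_Icc' hab hcont.continuousOn ⟨hb, ha⟩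
    exact ⟨c, hc, hc0⟩
  obtain ⟨x, hx, hx0⟩ := ivt (-2) (-1) (by norm_num) (by norm_num) (by norm_num)
  obtain ⟨y, hy, hy0⟩ := ivt' (-1) 0 (by norm_num) (by norm_num) (by norm_num)
  obtain ⟨z, hz, hz0⟩ := ivt 0 2 (by norm_num) (by norm_num) (by norm_num)
  have hxlt : x < -1 := lt_of_le_of_ne hx.2 (by intro h; rw [h] at hx0; norm_num at hx0)
  have hylt : y < 0 := lt_of_le_of_ne hy.2 (by intro h; rw [h] at hy0; norm_num at hy0)
  refine ⟨x, y, z, ?_, ?_, ?_, ?_, ?_, ?_⟩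
  · exact ne_of_lt (lt_of_lt_of_le hxlt hy.1)
  · exact ne_of_lt (lt_of_lt_of_le (hxlt.trans (by norm_num)) hz.1)
  · exact ne_of_lt (lt_of_lt_of_le hylt hz.1)
  all_goals
    rw [hmap, Polynomial.IsRoot]
    simp only [Polynomial.eval_sub, Polynomial.eval_mul, Polynomial.eval_pow,
      Polynomial.eval_X, Polynomial.eval_one, Polynomial.eval_ofNat]
  · exact hx0
  · exact hy0
  · exact hz0

theorem charpoly_second_davenport :
    (!![1, 1, 1; 1, -1, 0; 1, 0, 0] : Matrix (Fin 3) (Fin 3) ℤ).charpoly = X ^ 3 - 3 * X - 1 ∧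
    Irreducible (((!![1, 1, 1; 1, -1, 0; 1, 0, 0] : Matrix (Fin 3) (Fin 3) ℤ).charpoly).map (Int.castRingHom ℚ)) ∧
    hasThreeDistinctRealRoots (!![1, 1, 1; 1, -1, 0; 1, 0, 0] : Matrix (Fin 3) (Fin 3) ℤ).charpoly := by
  refine ⟨charpoly_eq, ?_, ?_⟩
  · rw [charpoly_eq]; exact irred_q
  · rw [charpoly_eq]; exact three_roots
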